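/- arXiv:2011.12316 — 2 statements merged into one kernel-verified Lean document; each statement's English description precedes it below -/
import Mathlib

section
/- Let θ : ℕ → ℕ be a sequence of positive integers such that θ i divides θ (i+1) for all i. Then for each k, the partial sum ∑_{i=0}^k 1/θ i can be written as u_k / θ k for some positive integer u_k, and if moreover θ i strictly divides θ (i+1) for all i, then u_k ≤ 2 * θ k. -/
theorem partial_sum_num_aux (θ : ℕ → ℕ)
    (hpos : ∀ i, 0 < θ i)
    (hdvd : ∀ i, θ i ∣ θ (i + 1)) (k : ℕ) :
    ∃ u : ℕ, 0 < u ∧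
      (∑ i ∈ Finset.range (k + 1), (1 : ℚ) / θ i) = (u : ℚ) / θ k ∧
      ((∀ i, θ i ≠ θ (i + 1)) → u < 2 * θ k) := by
  induction k with
  | zero =>
    refine ⟨1, one_pos, by simp, fun _ => by have := hpos 0; omega⟩
  | succ k ih =>
    obtain ⟨u, hu, hsum, hb⟩ := ih
    obtain ⟨c, hc⟩ := hdvd k
    have hk0 := hpos k
    have hk1 := hpos (k + 1)
    have hc0 : 0 < c := by
      rcases Nat.eq_zero_or_pos c with h | h
      · rw [hc, h] at hk1; simp at hk1
      · exact h
    refine ⟨u * c + 1, by positivity, ?_, ?_⟩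
    · rw [Finset.sum_range_succ, hsum, hc]
      have h1 : (θ k : ℚ) ≠ 0 := by positivity
      have h2 : (c : ℚ) ≠ 0 := by positivity
      push_cast
      field_simp
    · intro hst
      have hb' := hb hst
      have hc2 : 2 ≤ c := by
        rcases Nat.lt_or_ge c 2 with h | h
        · interval_cases c
          · exact absurd (hst k) (by simp [hc])
        · exact h
      rw [hc]
      nlinarith

theorem partial_sum_num (θ : ℕ → ℕ)
    (hpos : ∀ i, 0 < θ i)
    (hdvd : ∀ i, θ i ∣ θ (i + 1)) (k : ℕ) :
    ∃ u : ℕ, 0 < u ∧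
      (∑ i ∈ Finset.range (k + 1), (1 : ℚ) / θ i) = (u : ℚ) / θ k ∧
      ((∀ i, θ i ≠ θ (i + 1)) → u ≤ 2 * θ k) := by
  obtain ⟨u, h1, h2, h3⟩ := partial_sum_num_aux θ hpos hdvd k
  exact ⟨u, h1, h2, fun h => (h3 h).le⟩
end

section
/- Let R = ℂ[w,x,y,z] with homogeneous components R_d, let f ∈ R₄, and suppose Q₁₂ : R₁₂ → R₉⁴ is a linear map satisfying a = ∑_{i=0}^3 Q₁₂(a)_i ∂ᵢf for all a ∈ R₁₂. For d > 12 define Q_d : R_d → R_{d−3}⁴ recursively by writing a = ∑_{i=0}^3 xᵢ aᵢ with the four summands having pairwise disjoint monomial supports and setting Q_d(a) = ∑ᵢ xᵢ Q_{d−1}(aᵢ), where x₀,…,x₃ are the variables w,x,y,z. Then Q_d satisfies a = ∑ᵢ Q_d(a)_i ∂ᵢ f, and the operator norm of Q_d (with R_d given the 1-norm and R⁴ the sum of 1-norms) satisfies ‖Q_d‖ ≤ ‖Q₁₂‖ for all d ≥ 12. -/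
/-- The 1-norm of a multivariate polynomial: sum of absolute values of its coefficients. -/
noncomputable def norm1 (f : MvPolynomial (Fin 4) ℂ) : ℝ :=
  ∑ β ∈ f.support, ‖f.coeff β‖

lemma norm1_eq_superset (f : MvPolynomial (Fin 4) ℂ) (S : Finset ((Fin 4) →₀ ℕ))
    (h : f.support ⊆ S) : norm1 f = ∑ β ∈ S, ‖f.coeff β‖ := by
  rw [norm1]
  refine Finset.sum_subset h ?_
  intro β _ hβ
  simp [MvPolynomial.notMem_support_iff.mp hβ]

lemma norm1_add_le (p q : MvPolynomial (Fin 4) ℂ) :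
    norm1 (p + q) ≤ norm1 p + norm1 q := by
  classical
  rw [norm1_eq_superset (p + q) (p.support ∪ q.support)
      (by simpa using MvPolynomial.support_add (p := p) (q := q)),
    norm1_eq_superset p (p.support ∪ q.support) Finset.subset_union_left,
    norm1_eq_superset q (p.support ∪ q.support) Finset.subset_union_right,
    ← Finset.sum_add_distrib]
  refine Finset.sum_le_sum fun β _ => ?_
  simpa using norm_add_le _ _

lemma norm1_add_eq (p q : MvPolynomial (Fin 4) ℂ)
    (h : Disjoint p.support q.support) :
    norm1 (p + q) = norm1 p + norm1 q := by
  classical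
  rw [norm1_eq_superset (p + q) (p.support ∪ q.support)
      (by simpa using MvPolynomial.support_add (p := p) (q := q)),
    Finset.sum_union h, norm1, norm1]
  congr 1
  · refine Finset.sum_congr rfl fun β hβ => ?_
    have : q.coeff β = 0 := MvPolynomial.notMem_support_iff.mp
      (Finset.disjoint_left.mp h hβ)
    simp [MvPolynomial.coeff_add, this]
  · refine Finset.sum_congr rfl fun β hβ => ?_
    have : p.coeff β = 0 := MvPolynomial.notMem_support_iff.mp
      (Finset.disjoint_right.mp h hβ)
    simp [MvPolynomial.coeff_add, this]

lemma norm1_sum_le {ι : Type*} (s : Finset ι) (p : ι → MvPolynomial (Fin 4) ℂ) :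
    norm1 (∑ i ∈ s, p i) ≤ ∑ i ∈ s, norm1 (p i) := by
  classical
  induction s using Finset.induction with
  | empty => simp [norm1]
  | insert _ _ h ih =>
    rw [Finset.sum_insert h, Finset.sum_insert h]
    exact (norm1_add_le _ _).trans (by linarith)

lemma norm1_sum_eq {ι : Type*} (s : Finset ι) (p : ι → MvPolynomial (Fin 4) ℂ)
    (h : (s : Set ι).Pairwise fun i j => Disjoint (p i).support (p j).support) :
    norm1 (∑ i ∈ s, p i) = ∑ i ∈ s, norm1 (p i) := by
  classical
  induction s using Finset.induction with
  | empty => simp [norm1]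
  | @insert a s ha ih =>
    rw [Finset.sum_insert ha, Finset.sum_insert ha,
      norm1_add_eq _ _ ?_, ih (h.mono (by simp [Set.subset_def]; tauto))]
    have hsub : (∑ i ∈ s, p i).support ⊆ s.biUnion fun i => (p i).support :=
      MvPolynomial.support_sum
    refine Finset.disjoint_left.mpr fun β hβa hβs => ?_
    obtain ⟨i, hi, hβi⟩ := Finset.mem_biUnion.mp (hsub hβs)
    have hne : a ≠ i := fun e => ha (e ▸ hi)
    exact Finset.disjoint_left.mp
      (h (by simp) (by simp [hi]) hne) hβa hβi

lemma norm1_X_mul (i : Fin 4) (p : MvPolynomial (Fin 4) ℂ) :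
    norm1 (MvPolynomial.X i * p) = norm1 p := by
  rw [norm1, norm1, MvPolynomial.support_X_mul, Finset.sum_map]
  refine Finset.sum_congr rfl fun β _ => ?_
  simp [addLeftEmbedding_apply]

theorem division_map_norm_bound
    (f : MvPolynomial (Fin 4) ℂ) (hf : f.IsHomogeneous 4)
    (Q : ℕ → MvPolynomial (Fin 4) ℂ → Fin 4 → MvPolynomial (Fin 4) ℂ)
    (hlin : ∀ d j, IsLinearMap ℂ fun a => Q d a j)
    (hbase : ∀ a : MvPolynomial (Fin 4) ℂ, a.IsHomogeneous 12 →
      a = ∑ i, Q 12 a i * MvPolynomial.pderiv i f)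
    (N : ℝ) (hN : ∀ a : MvPolynomial (Fin 4) ℂ, a.IsHomogeneous 12 →
      ∑ j, norm1 (Q 12 a j) ≤ N * norm1 a)
    (hrec : ∀ d, 12 < d → ∀ a : MvPolynomial (Fin 4) ℂ, a.IsHomogeneous d →
      ∃ b : Fin 4 → MvPolynomial (Fin 4) ℂ,
        (∀ i, (b i).IsHomogeneous (d - 1)) ∧
        a = ∑ i, MvPolynomial.X i * b i ∧
        (Set.univ.Pairwise fun i j : Fin 4 =>
          Disjoint (MvPolynomial.X i * b i).support (MvPolynomial.X j * b j).support) ∧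
        (∀ j, Q d a j = ∑ i, MvPolynomial.X i * Q (d - 1) (b i) j)) :
    ∀ d, 12 ≤ d → ∀ a : MvPolynomial (Fin 4) ℂ, a.IsHomogeneous d →
      (a = ∑ i, Q d a i * MvPolynomial.pderiv i f) ∧
      ∑ j, norm1 (Q d a j) ≤ N * norm1 a := by
  intro d hd
  induction d, hd using Nat.le_induction with
  | base => exact fun a ha => ⟨hbase a ha, hN a ha⟩
  | succ d hd ih =>
    intro a ha
    obtain ⟨b, hbhom, hab, hdisj, hQ⟩ := hrec (d + 1) (by omega) a ha
    simp only [Nat.add_sub_cancel] at hbhom hQ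
    have hih : ∀ i, (b i = ∑ j, Q d (b i) j * MvPolynomial.pderiv j f) ∧
        ∑ j, norm1 (Q d (b i) j) ≤ N * norm1 (b i) := fun i => ih (b i) (hbhom i)
    constructor
    · calc a = ∑ i, MvPolynomial.X i * b i := hab
        _ = ∑ i, MvPolynomial.X i * ∑ j, Q d (b i) j * MvPolynomial.pderiv j f := by
            refine Finset.sum_congr rfl fun i _ => ?_
            rw [← (hih i).1]
        _ = ∑ i, ∑ j, MvPolynomial.X i * Q d (b i) j * MvPolynomial.pderiv j f := by
            simp [Finset.mul_sum, mul_assoc]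
        _ = ∑ j, (∑ i, MvPolynomial.X i * Q d (b i) j) * MvPolynomial.pderiv j f := by
            rw [Finset.sum_comm]
            simp [Finset.sum_mul]
        _ = ∑ j, Q (d + 1) a j * MvPolynomial.pderiv j f := by
            refine Finset.sum_congr rfl fun j _ => ?_
            rw [hQ j]
    · have h1 : ∀ j, norm1 (Q (d + 1) a j) ≤ ∑ i, norm1 (Q d (b i) j) := by
        intro j
        rw [hQ j]
        exact (norm1_sum_le _ _).trans_eq
          (Finset.sum_congr rfl fun i _ => norm1_X_mul i _)
      calc ∑ j, norm1 (Q (d + 1) a j) ≤ ∑ j, ∑ i, norm1 (Q d (b i) j) :=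
            Finset.sum_le_sum fun j _ => h1 j
        _ = ∑ i, ∑ j, norm1 (Q d (b i) j) := Finset.sum_comm
        _ ≤ ∑ i, N * norm1 (b i) := Finset.sum_le_sum fun i _ => (hih i).2
        _ = N * ∑ i, norm1 (MvPolynomial.X i * b i) := by
            rw [Finset.mul_sum]
            exact Finset.sum_congr rfl fun i _ => by rw [norm1_X_mul]
        _ = N * norm1 a := by
            rw [hab, norm1_sum_eq _ _ (by simpa using hdisj)]
end
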